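/- Scalar-output version of Theorem 1: Let Φ ∈ ℝ^{p×T} with Φ Φᵀ positive definite, X ∈ ℝ^T, γ_w > 0, and D ∈ ℝ^{p×p} positive definite. Suppose Φ Φᵀ ⪰ (γ_w − Xᵀ X + Xᵀ Φᵀ (Φ Φᵀ)⁻¹ Φ X) · D. Then every θ ∈ ℝ^p with Σ_{k} (X_k − Φ_kᵀ θ)² ≤ γ_w (Φ_k denotes the k-th column of Φ) satisfies (θ − θ̂)ᵀ D (θ − θ̂) ≤ 1, where θ̂ = (Φ Φᵀ)⁻¹ Φ X. In particular the least-squares estimate achieves the exploration goal for the true parameter. -/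

import Mathlib

open Matrix Finset

theorem targeted_exploration_scalar (p T : ℕ)
    (Φ : Matrix (Fin p) (Fin T) ℝ) (hΦ : (Φ * Φᵀ).PosDef)
    (X : Fin T → ℝ) (γw : ℝ) (hγw : 0 < γw)
    (D : Matrix (Fin p) (Fin p) ℝ) (hD : D.PosDef)
    (θhat : Fin p → ℝ) (hθhat : θhat = (Φ * Φᵀ)⁻¹ *ᵥ (Φ *ᵥ X))
    (hLMI : (Φ * Φᵀ -
        (γw - X ⬝ᵥ X + X ⬝ᵥ (Φᵀ * (Φ * Φᵀ)⁻¹ * Φ) *ᵥ X) • D).PosSemidef)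
    (θ : Fin p → ℝ)
    (hθ : ∑ k, (X k - (fun i => Φ i k) ⬝ᵥ θ) ^ 2 ≤ γw) :
    (θ - θhat) ⬝ᵥ D *ᵥ (θ - θhat) ≤ 1 := by
  set A := Φ * Φᵀ with hA
  have hdet : IsUnit A.det := isUnit_iff_ne_zero.2 hΦ.det_pos.ne'
  have hAinv : A * A⁻¹ = 1 := Matrix.mul_nonsing_inv A hdet
  have hAθ : A *ᵥ θhat = Φ *ᵥ X := by
    rw [hθhat, Matrix.mulVec_mulVec, hAinv, Matrix.one_mulVec]
  set v := θ - θhat with hv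
  set r := X - Φᵀ *ᵥ θhat with hr
  clear_value v r
  have hΦr : Φ *ᵥ r = 0 := by
    rw [hr, Matrix.mulVec_sub, Matrix.mulVec_mulVec, hAθ, sub_self]
  have horth : ∀ w : Fin p → ℝ, r ⬝ᵥ (Φᵀ *ᵥ w) = 0 := by
    intro w
    rw [Matrix.dotProduct_mulVec, Matrix.vecMul_transpose, hΦr, zero_dotProduct]
  -- residual as dot product
  have hres : ∑ k, (X k - (fun i => Φ i k) ⬝ᵥ θ) ^ 2
      = (X - Φᵀ *ᵥ θ) ⬝ᵥ (X - Φᵀ *ᵥ θ) := by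
    simp [dotProduct, Matrix.mulVec, Matrix.transpose_apply, sq]
  have hsplit : X - Φᵀ *ᵥ θ = r - Φᵀ *ᵥ v := by
    rw [hr, hv, Matrix.mulVec_sub]; abel
  have hss : (Φᵀ *ᵥ v) ⬝ᵥ (Φᵀ *ᵥ v) = v ⬝ᵥ A *ᵥ v := by
    rw [Matrix.dotProduct_mulVec, Matrix.vecMul_transpose, Matrix.mulVec_mulVec,
      dotProduct_comm]
  have hexp : (X - Φᵀ *ᵥ θ) ⬝ᵥ (X - Φᵀ *ᵥ θ) = r ⬝ᵥ r + v ⬝ᵥ A *ᵥ v := by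
    have h2 : (Φᵀ *ᵥ v) ⬝ᵥ r = 0 := by rw [dotProduct_comm]; exact horth v
    rw [hsplit, sub_dotProduct, dotProduct_sub, dotProduct_sub,
      horth v, h2, hss]
    ring
  -- compute r ⬝ r
  have hrr : r ⬝ᵥ r = X ⬝ᵥ X - X ⬝ᵥ (Φᵀ *ᵥ θhat) := by
    have h1 : r ⬝ᵥ r = (X - Φᵀ *ᵥ θhat) ⬝ᵥ r := by rw [← hr]
    rw [h1, sub_dotProduct, dotProduct_comm (Φᵀ *ᵥ θhat) r, horth θhat,
      sub_zero, hr, dotProduct_sub]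
  -- rewrite the c term
  have hcX : X ⬝ᵥ (Φᵀ * A⁻¹ * Φ) *ᵥ X = X ⬝ᵥ (Φᵀ *ᵥ θhat) := by
    rw [← Matrix.mulVec_mulVec, ← Matrix.mulVec_mulVec, ← hθhat]
  set c := γw - X ⬝ᵥ X + X ⬝ᵥ (Φᵀ * A⁻¹ * Φ) *ᵥ X with hc
  have hcr : c = γw - r ⬝ᵥ r := by rw [hc, hcX, hrr]; ring
  -- key inequality: v A v ≤ c
  have hkey : v ⬝ᵥ A *ᵥ v ≤ c := by
    have := hθ
    rw [hres, hexp] at this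
    rw [hcr]; linarith
  -- LMI
  have hLMI' : c * (v ⬝ᵥ D *ᵥ v) ≤ v ⬝ᵥ A *ᵥ v := by
    have h0 := hLMI.dotProduct_mulVec_nonneg v
    rwa [star_trivial, Matrix.sub_mulVec, dotProduct_sub, Matrix.smul_mulVec,
      dotProduct_smul, smul_eq_mul, sub_nonneg] at h0
  have hq : 0 ≤ v ⬝ᵥ D *ᵥ v := by simpa using hD.posSemidef.dotProduct_mulVec_nonneg v
  have hAv : 0 ≤ v ⬝ᵥ A *ᵥ v := by simpa using hΦ.posSemidef.dotProduct_mulVec_nonneg v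
  rcases lt_or_eq_of_le (hAv.trans hkey) with hcpos | hczero
  · have : c * (v ⬝ᵥ D *ᵥ v) ≤ c * 1 := by rw [mul_one]; exact hLMI'.trans hkey
    exact le_of_mul_le_mul_left this hcpos
  · have hA0 : v ⬝ᵥ A *ᵥ v = 0 := le_antisymm (hkey.trans hczero.symm.le) hAv
    have hv0 : v = 0 := by
      by_contra hne
      exact (by simpa using hΦ.dotProduct_mulVec_pos hne : 0 < v ⬝ᵥ A *ᵥ v).ne' hA0
    rw [hv0]
    simp
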